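/- The gain η(ε) = (h(ε) + h(2ε(1−ε)))/(2h(ε)) tends to 3/2 as ε tends to 0 from the right, and also tends to 3/2 as ε tends to 1 from the left. -/

import Mathlib

open Real Filter

private lemma log_one_sub_div : Tendsto (fun x : ℝ => log (1 - x) / x) (nhdsWithin 0 (Set.Ioi 0)) (nhds (-1)) := by
  have h : HasDerivAt (fun x : ℝ => log (1 - x)) (-1) 0 := by
    have := (Real.hasDerivAt_log (by norm_num : (1:ℝ) - 0 ≠ 0)).comp 0
      ((hasDerivAt_id 0).const_sub 1)
    simpa [Function.comp_def] using this
  have := hasDerivAt_iff_tendsto_slope.mp h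
  have := this.mono_left (nhdsWithin_mono _ (fun x hx => ne_of_gt hx))
  refine this.congr (fun x => ?_)
  simp [slope_def_field, div_eq_inv_mul]

private lemma inv_log_tendsto : Tendsto (fun x : ℝ => (log x)⁻¹) (nhdsWithin 0 (Set.Ioi 0)) (nhds 0) := by
  have h : Tendsto (fun x : ℝ => (-log x)⁻¹) (nhdsWithin 0 (Set.Ioi 0)) (nhds 0) :=
    (tendsto_neg_atBot_atTop.comp tendsto_log_nhdsGT_zero).inv_tendsto_atTop
  have := h.neg
  simp only [neg_zero] at this
  refine this.congr (fun x => ?_)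
  rw [← inv_neg, neg_neg]

private lemma aux_div (a b : ℝ) (ha : a ≠ 0) : (a + b) / (2 * a) = (1 + b / a) / 2 := by
  rw [div_eq_div_iff (by simp [ha]) (by norm_num)]
  field_simp

/-- `binEntropy x / (x * log x) → -1` as `x → 0⁺`. -/
private lemma lemA : Tendsto (fun x : ℝ => binEntropy x / (x * log x))
    (nhdsWithin 0 (Set.Ioi 0)) (nhds (-1)) := by
  have h2 : Tendsto (fun x : ℝ => ((1 - x) * (log (1 - x) / x)) * (log x)⁻¹)
      (nhdsWithin 0 (Set.Ioi 0)) (nhds 0) := by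
    have h1 : Tendsto (fun x : ℝ => (1 - x) * (log (1 - x) / x))
        (nhdsWithin 0 (Set.Ioi 0)) (nhds (-1)) := by
      have hc : Tendsto (fun x : ℝ => 1 - x) (nhdsWithin 0 (Set.Ioi 0)) (nhds 1) := by
        have h0 : Tendsto (fun x : ℝ => 1 - x) (nhds 0) (nhds 1) := by
          have hcont : Continuous (fun x : ℝ => 1 - x) := continuous_const.sub continuous_id
          simpa using hcont.tendsto 0
        exact h0.mono_left nhdsWithin_le_nhds
      simpa using hc.mul log_one_sub_div
    simpa using h1.mul inv_log_tendsto
  have key : Tendsto (fun x : ℝ => -1 - ((1 - x) * (log (1 - x) / x)) * (log x)⁻¹)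
      (nhdsWithin 0 (Set.Ioi 0)) (nhds (-1)) := by
    simpa using (tendsto_const_nhds (x := (-1:ℝ))).sub h2
  refine key.congr' ?_
  filter_upwards [Ioo_mem_nhdsGT_of_mem (by norm_num : (0:ℝ) ∈ Set.Ico 0 1)] with x hx
  obtain ⟨hx0, hx1⟩ := hx
  have hxne : x ≠ 0 := ne_of_gt hx0
  have hlogne : log x ≠ 0 := log_ne_zero_of_pos_of_ne_one hx0 (by linarith)
  have hbe : binEntropy x = -(x * log x) - (1 - x) * log (1 - x) := by
    rw [binEntropy_eq_negMulLog_add_negMulLog_one_sub]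
    simp [negMulLog]; ring
  rw [hbe]
  field_simp

/-- `binEntropy (2ε(1-ε)) / binEntropy ε → 2` as `ε → 0⁺`. -/
private lemma lemB : Tendsto (fun ε : ℝ => binEntropy (2 * ε * (1 - ε)) / binEntropy ε)
    (nhdsWithin 0 (Set.Ioi 0)) (nhds 2) := by
  set u : ℝ → ℝ := fun ε => 2 * ε * (1 - ε) with hu
  have hucont : Tendsto u (nhds 0) (nhds 0) := by
    have hc : Continuous u := by exact (continuous_const.mul continuous_id).mul (continuous_const.sub continuous_id)
    have h0 : u 0 = 0 := by simp [hu]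
    simpa [h0] using hc.tendsto 0
  have hutend : Tendsto u (nhdsWithin 0 (Set.Ioi 0)) (nhdsWithin 0 (Set.Ioi 0)) := by
    rw [tendsto_nhdsWithin_iff]
    refine ⟨hucont.mono_left nhdsWithin_le_nhds, ?_⟩
    filter_upwards [Ioo_mem_nhdsGT_of_mem (by norm_num : (0:ℝ) ∈ Set.Ico 0 1)] with x hx
    have : 0 < 2 * x * (1 - x) := by nlinarith [hx.1, hx.2]
    exact this
  -- factor 1 : binEntropy u / (u * log u) → -1
  have f1 : Tendsto (fun ε => binEntropy (u ε) / (u ε * log (u ε)))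
      (nhdsWithin 0 (Set.Ioi 0)) (nhds (-1)) := lemA.comp hutend
  -- factor 2 : (u * log u) / (ε * log ε) → 2
  have f2 : Tendsto (fun ε => (u ε * log (u ε)) / (ε * log ε))
      (nhdsWithin 0 (Set.Ioi 0)) (nhds 2) := by
    have hlograt : Tendsto (fun ε : ℝ => log 2 * (log ε)⁻¹ + 1 + log (1 - ε) * (log ε)⁻¹)
        (nhdsWithin 0 (Set.Ioi 0)) (nhds 1) := by
      have t1 : Tendsto (fun ε : ℝ => log 2 * (log ε)⁻¹) (nhdsWithin 0 (Set.Ioi 0)) (nhds 0) := by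
        simpa using (tendsto_const_nhds (x := log 2)).mul inv_log_tendsto
      have t3 : Tendsto (fun ε : ℝ => log (1 - ε) * (log ε)⁻¹)
          (nhdsWithin 0 (Set.Ioi 0)) (nhds 0) := by
        have hc : Tendsto (fun ε : ℝ => log (1 - ε)) (nhdsWithin 0 (Set.Ioi 0)) (nhds 0) := by
          have hcont : Continuous (fun ε : ℝ => 1 - ε) := continuous_const.sub continuous_id
          have hca : ContinuousAt (fun ε : ℝ => log (1 - ε)) 0 :=
            (Real.continuousAt_log (by norm_num : (1:ℝ) - 0 ≠ 0)).comp hcont.continuousAt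
          have h' := hca.tendsto.mono_left (nhdsWithin_le_nhds (s := Set.Ioi 0))
          simpa using h'
        simpa using hc.mul inv_log_tendsto
      have hsum := (t1.add (tendsto_const_nhds (x := (1:ℝ)))).add t3
      simpa using hsum
    have hfac : Tendsto (fun ε : ℝ => (2 * (1 - ε)) *
        (log 2 * (log ε)⁻¹ + 1 + log (1 - ε) * (log ε)⁻¹))
        (nhdsWithin 0 (Set.Ioi 0)) (nhds 2) := by
      have hc : Tendsto (fun ε : ℝ => 2 * (1 - ε)) (nhdsWithin 0 (Set.Ioi 0)) (nhds 2) := by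
        have : Continuous (fun ε : ℝ => 2 * (1 - ε)) := by continuity
        have := this.tendsto 0
        simpa using this.mono_left nhdsWithin_le_nhds
      simpa using hc.mul hlograt
    refine hfac.congr' ?_
    filter_upwards [Ioo_mem_nhdsGT_of_mem (by norm_num : (0:ℝ) ∈ Set.Ico 0 (1/2))] with x hx
    obtain ⟨hx0, hx2⟩ := hx
    have hx1 : x < 1 := by linarith
    have hlogne : log x ≠ 0 := log_ne_zero_of_pos_of_ne_one hx0 (by linarith)
    have hxne : x ≠ 0 := ne_of_gt hx0
    have hlogu : log (u x) = log 2 + log x + log (1 - x) := by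
      show log (2 * x * (1 - x)) = _
      rw [Real.log_mul (by positivity) (by linarith), Real.log_mul (by norm_num) hxne]
    rw [hlogu]
    simp only [hu]
    field_simp
  -- factor 3 : (ε * log ε) / binEntropy ε → -1
  have f3 : Tendsto (fun ε : ℝ => (ε * log ε) / binEntropy ε)
      (nhdsWithin 0 (Set.Ioi 0)) (nhds (-1)) := by
    have h := lemA.inv₀ (by norm_num)
    norm_num at h
    exact h
  have := (f1.mul f2).mul f3
  have hprod : Tendsto (fun ε => (binEntropy (u ε) / (u ε * log (u ε)))
      * ((u ε * log (u ε)) / (ε * log ε)) * ((ε * log ε) / binEntropy ε))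
      (nhdsWithin 0 (Set.Ioi 0)) (nhds 2) := by simpa using this
  refine hprod.congr' ?_
  filter_upwards [Ioo_mem_nhdsGT_of_mem (by norm_num : (0:ℝ) ∈ Set.Ico 0 (1/2))] with x hx
  obtain ⟨hx0, hx2⟩ := hx
  have hx1 : x < 1 := by linarith
  have hu0 : 0 < u x := by simp only [hu]; nlinarith
  have hu1 : u x < 1 := by simp only [hu]; nlinarith
  have hulogne : u x * log (u x) ≠ 0 :=
    mul_ne_zero (ne_of_gt hu0) (log_ne_zero_of_pos_of_ne_one hu0 (by linarith))
  have hxlogne : x * log x ≠ 0 :=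
    mul_ne_zero (ne_of_gt hx0) (log_ne_zero_of_pos_of_ne_one hx0 (by linarith))
  have hbene : binEntropy x ≠ 0 := ne_of_gt (binEntropy_pos hx0 hx1)
  field_simp
  rw [mul_assoc, mul_div_assoc, div_self (mul_ne_zero (right_ne_zero_of_mul hulogne) (right_ne_zero_of_mul hxlogne)), mul_one]
  simp only [hu]
  ring_nf

theorem gain_tendsto_three_halves :
    Tendsto (fun ε : ℝ => (binEntropy ε + binEntropy (2 * ε * (1 - ε))) / (2 * binEntropy ε))
      (nhdsWithin 0 (Set.Ioi 0)) (nhds (3 / 2)) ∧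
    Tendsto (fun ε : ℝ => (binEntropy ε + binEntropy (2 * ε * (1 - ε))) / (2 * binEntropy ε))
      (nhdsWithin 1 (Set.Iio 1)) (nhds (3 / 2)) := by
  set F : ℝ → ℝ := fun ε => (binEntropy ε + binEntropy (2 * ε * (1 - ε))) / (2 * binEntropy ε)
    with hF
  have part1 : Tendsto F (nhdsWithin 0 (Set.Ioi 0)) (nhds (3 / 2)) := by
    have key : Tendsto (fun ε : ℝ => (1 + binEntropy (2 * ε * (1 - ε)) / binEntropy ε) / 2)
        (nhdsWithin 0 (Set.Ioi 0)) (nhds (3 / 2)) := by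
      have := ((tendsto_const_nhds (x := (1:ℝ))).add lemB).div_const 2
      norm_num at this
      exact this
    refine key.congr' ?_
    filter_upwards [Ioo_mem_nhdsGT_of_mem (by norm_num : (0:ℝ) ∈ Set.Ico 0 1)] with x hx
    have hbene : binEntropy x ≠ 0 := ne_of_gt (binEntropy_pos hx.1 hx.2)
    rw [hF]
    exact (aux_div _ _ hbene).symm
  refine ⟨part1, ?_⟩
  have hsym : ∀ x : ℝ, F (1 - x) = F x := by
    intro x
    rw [hF]
    simp only
    rw [binEntropy_one_sub, show 2 * (1 - x) * (1 - (1 - x)) = 2 * x * (1 - x) by ring]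
  have hmap : Tendsto (fun ε : ℝ => 1 - ε) (nhdsWithin 1 (Set.Iio 1))
      (nhdsWithin 0 (Set.Ioi 0)) := by
    rw [tendsto_nhdsWithin_iff]
    constructor
    · have : Tendsto (fun ε : ℝ => 1 - ε) (nhds 1) (nhds 0) := by
        have : Continuous (fun ε : ℝ => 1 - ε) := by continuity
        simpa using this.tendsto 1
      exact this.mono_left nhdsWithin_le_nhds
    · filter_upwards [self_mem_nhdsWithin] with x hx
      simp only [Set.mem_Iio] at hx
      exact Set.mem_Ioi.mpr (by linarith)
  have := part1.comp hmap
  refine this.congr (fun x => ?_)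
  simp only [Function.comp]
  exact hsym x
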